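/- Suppose that f : ℝ → ℝ is a continuous even function (f(−x) = f(x) for all x) which is strictly increasing on (0,∞). Let Γ = {(x, f(x)) : x ∈ ℝ} ⊆ ℝ² be its graph, equipped with the Euclidean metric of ℝ². Then for every integer n ≥ 2, Γ admits a Lipschitz retraction Γ(n) → Γ (a map r from nonempty subsets of Γ with at most n elements to Γ such that r({a}) = a for every a ∈ Γ and d(r(A), r(B)) ≤ L·d_H(A,B) for some constant L) and, in particular, Γ admits a Lipschitz n-mean. -/

import Mathlib

open Metric Set

namespace AuxGraphRetraction

noncomputable section

/-- The point `(t, f t)` of the plane. -/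
def pt (f : ℝ → ℝ) (t : ℝ) : EuclideanSpace ℝ (Fin 2) :=
  (WithLp.equiv 2 (Fin 2 → ℝ)).symm ![t, f t]

lemma pt_apply_zero (f : ℝ → ℝ) (t : ℝ) : pt f t 0 = t := by
  simp [pt]

lemma pt_apply_one (f : ℝ → ℝ) (t : ℝ) : pt f t 1 = f t := by
  simp [pt]

lemma dist_pt_le (f : ℝ → ℝ) (s t : ℝ) :
    dist (pt f s) (pt f t) ≤ |s - t| + |f s - f t| := by
  rw [EuclideanSpace.dist_eq]
  have h1 : ∑ i : Fin 2, dist (pt f s i) (pt f t i) ^ 2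
      = |s - t| ^ 2 + |f s - f t| ^ 2 := by
    rw [Fin.sum_univ_two, pt_apply_zero, pt_apply_zero, pt_apply_one, pt_apply_one,
      Real.dist_eq, Real.dist_eq]
  rw [h1]
  have h2 : |s - t| ^ 2 + |f s - f t| ^ 2 ≤ (|s - t| + |f s - f t|) ^ 2 := by
    nlinarith [abs_nonneg (s - t), abs_nonneg (f s - f t)]
  calc Real.sqrt (|s - t| ^ 2 + |f s - f t| ^ 2)
      ≤ Real.sqrt ((|s - t| + |f s - f t|) ^ 2) := Real.sqrt_le_sqrt h2
    _ = |s - t| + |f s - f t| := Real.sqrt_sq (by positivity)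

variable (Γ : Set (EuclideanSpace ℝ (Fin 2)))

/-- First coordinate of a point of `Γ`. -/
def XX (p : Γ) : ℝ := (p : EuclideanSpace ℝ (Fin 2)) 0

/-- Second coordinate of a point of `Γ`. -/
def YY (p : Γ) : ℝ := (p : EuclideanSpace ℝ (Fin 2)) 1

/-- Coordinates are 1-Lipschitz for the Euclidean distance. -/
lemma coord_lip (p q : Γ) (i : Fin 2) :
    |(p : EuclideanSpace ℝ (Fin 2)) i - (q : EuclideanSpace ℝ (Fin 2)) i| ≤ dist p q := by
  rw [Subtype.dist_eq, EuclideanSpace.dist_eq]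
  have h1 : |(p : EuclideanSpace ℝ (Fin 2)) i - (q : EuclideanSpace ℝ (Fin 2)) i|
      = Real.sqrt (dist ((p : EuclideanSpace ℝ (Fin 2)) i)
          ((q : EuclideanSpace ℝ (Fin 2)) i) ^ 2) := by
    rw [Real.sqrt_sq dist_nonneg, Real.dist_eq]
  rw [h1]
  apply Real.sqrt_le_sqrt
  exact Finset.single_le_sum
    (f := fun j : Fin 2 => dist ((p : EuclideanSpace ℝ (Fin 2)) j)
      ((q : EuclideanSpace ℝ (Fin 2)) j) ^ 2)
    (fun j _ => sq_nonneg _) (Finset.mem_univ i)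

/-- The minimum of `|x|`-coordinates over a subset of `Γ`. -/
def mm (S : Set Γ) : ℝ := sInf ((fun p => |XX Γ p|) '' S)

/-- `S` has a point with nonnegative first coordinate. -/
def Pos (S : Set Γ) : Prop := ∃ p ∈ S, 0 ≤ XX Γ p

open Classical in
/-- The signed output coordinate. -/
def xi (S : Set Γ) : ℝ := if Pos Γ S then mm Γ S else -(mm Γ S)

lemma mm_mem {S : Set Γ} (hne : S.Nonempty) (hfin : S.Finite) :
    ∃ p ∈ S, |XX Γ p| = mm Γ S := by
  have h := (hne.image (fun p => |XX Γ p|)).csInf_mem (hfin.image _)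
  obtain ⟨p, hp, hp2⟩ := h
  exact ⟨p, hp, hp2⟩

lemma mm_le {S : Set Γ} (hfin : S.Finite) {p : Γ} (hp : p ∈ S) :
    mm Γ S ≤ |XX Γ p| :=
  csInf_le (hfin.image _).bddBelow ⟨p, hp, rfl⟩

lemma mm_nonneg {S : Set Γ} (hne : S.Nonempty) (hfin : S.Finite) :
    0 ≤ mm Γ S := by
  obtain ⟨p, _, hp2⟩ := mm_mem Γ hne hfin
  rw [← hp2]
  exact abs_nonneg _

end
end AuxGraphRetraction

open AuxGraphRetraction

/-- If `f : ℝ → ℝ` is continuous, even, and strictly increasing on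
`(0,∞)`, then its graph `Γ ⊆ ℝ²` (with the Euclidean metric) admits, for every `n ≥ 2`,
a Lipschitz retraction `Γ(n) → Γ` (where `Γ(n)` is the space of nonempty subsets of `Γ`
with at most `n` elements, with the Hausdorff distance), and in particular a Lipschitz
`n`-mean. -/
theorem graph_of_even_function_lipschitz_retraction_and_mean
    (f : ℝ → ℝ) (hf_cont : Continuous f) (hf_even : ∀ x : ℝ, f (-x) = f x)
    (hf_mono : StrictMonoOn f (Set.Ioi (0 : ℝ)))
    (Γ : Set (EuclideanSpace ℝ (Fin 2)))
    (hΓ : Γ = {p : EuclideanSpace ℝ (Fin 2) | p 1 = f (p 0)})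
    (n : ℕ) (hn : 2 ≤ n) :
    (∃ L : ℝ, 0 ≤ L ∧
      ∃ r : {A : Set Γ // A.Nonempty ∧ A.Finite ∧ A.ncard ≤ n} → Γ,
        (∀ (a : Γ) (A : {A : Set Γ // A.Nonempty ∧ A.Finite ∧ A.ncard ≤ n}),
          A.1 = {a} → r A = a) ∧
        (∀ A B : {A : Set Γ // A.Nonempty ∧ A.Finite ∧ A.ncard ≤ n},
          dist (r A) (r B) ≤ L * Metric.hausdorffDist A.1 B.1)) ∧
    (∃ L : ℝ, 0 ≤ L ∧
      ∃ μ : (Fin n → Γ) → Γ,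
        (∀ (x : Fin n → Γ) (π : Equiv.Perm (Fin n)), μ (x ∘ π) = μ x) ∧
        (∀ a : Γ, μ (fun _ => a) = a) ∧
        (∀ x y : Fin n → Γ, dist (μ x) (μ y) ≤ L * ∑ k, dist (x k) (y k))) := by
  classical
  -- Basic facts about `f`.
  have habs : ∀ x : ℝ, f |x| = f x := by
    intro x
    rcases abs_choice x with h | h
    · rw [h]
    · rw [h, hf_even]
  have hmono : ∀ a b : ℝ, 0 ≤ a → a ≤ b → f a ≤ f b := by
    intro a b ha hab
    rcases eq_or_lt_of_le hab with rfl | hlt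
    · exact le_rfl
    rcases eq_or_lt_of_le ha with ha0 | ha0
    · -- a = 0
      subst ha0
      have htend : Filter.Tendsto f (nhdsWithin 0 (Set.Ioi 0)) (nhds (f 0)) :=
        (hf_cont.tendsto 0).mono_left nhdsWithin_le_nhds
      refine le_of_tendsto htend ?_
      have hmem : Set.Ioo (0:ℝ) b ∈ nhdsWithin (0:ℝ) (Set.Ioi 0) :=
        Ioo_mem_nhdsGT_of_mem ⟨le_refl 0, hlt⟩
      filter_upwards [hmem] with t ht
      exact (hf_mono ht.1 hlt ht.2).le
    · exact (hf_mono ha0 (ha0.trans hlt) hlt).le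
  -- Points of `Γ` satisfy the graph equation.
  have hmemY : ∀ p : Γ, YY Γ p = f (XX Γ p) := by
    intro p
    have hv : (p : EuclideanSpace ℝ (Fin 2)) ∈ {q : EuclideanSpace ℝ (Fin 2) | q 1 = f (q 0)} := by
      rw [← hΓ]
      exact p.2
    exact hv
  -- Graph points with the constructed coordinate.
  have hpt_mem : ∀ t : ℝ, pt f t ∈ Γ := by
    intro t
    rw [hΓ]
    show pt f t 1 = f (pt f t 0)
    rw [pt_apply_one, pt_apply_zero]
  -- For any point `p` of `Γ`, `f (mm S) ≤ YY p` for `p ∈ S`.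
  have hfm_le : ∀ (S : Set Γ), S.Nonempty → S.Finite → ∀ p ∈ S,
      f (mm Γ S) ≤ YY Γ p := by
    intro S hne hfin p hp
    have h1 : f |XX Γ p| = YY Γ p := by rw [habs, hmemY]
    rw [← h1]
    exact hmono _ _ (mm_nonneg Γ hne hfin) (mm_le Γ hfin hp)
  -- `f (mm S)` is attained as a `YY` value.
  have hfm_eq : ∀ (S : Set Γ), S.Nonempty → S.Finite →
      ∃ p ∈ S, f (mm Γ S) = YY Γ p := by
    intro S hne hfin
    obtain ⟨p, hp, hp2⟩ := mm_mem Γ hne hfin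
    refine ⟨p, hp, ?_⟩
    rw [← hp2, habs, hmemY]
  -- Points of one finite set are close to points of the other.
  have hclose : ∀ (S T : Set Γ), S.Nonempty → S.Finite → T.Nonempty → T.Finite →
      ∀ p ∈ S, ∃ q ∈ T, dist p q ≤ Metric.hausdorffDist S T := by
    intro S T hSne hSfin hTne hTfin p hp
    have hne : EMetric.hausdorffEdist S T ≠ ⊤ :=
      Metric.hausdorffEdist_ne_top_of_nonempty_of_bounded hSne hTne
        hSfin.isBounded hTfin.isBounded
    have h1 : Metric.infDist p T ≤ Metric.hausdorffDist S T :=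
      Metric.infDist_le_hausdorffDist_of_mem hp hne
    obtain ⟨q, hq, hq2⟩ := hTfin.isCompact.exists_infDist_eq_dist hTne p
    exact ⟨q, hq, by rw [← hq2]; exact h1⟩
  -- `mm` is 1-Lipschitz with respect to the Hausdorff distance.
  have hmm_lip : ∀ (S T : Set Γ), S.Nonempty → S.Finite → T.Nonempty → T.Finite →
      mm Γ S ≤ mm Γ T + Metric.hausdorffDist S T := by
    intro S T hSne hSfin hTne hTfin
    obtain ⟨q, hq, hq2⟩ := mm_mem Γ hTne hTfin
    obtain ⟨a, ha, had⟩ := hclose T S hTne hTfin hSne hSfin q hq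
    have h1 : mm Γ S ≤ |XX Γ a| := mm_le Γ hSfin ha
    have h2 : |XX Γ a| - |XX Γ q| ≤ |XX Γ a - XX Γ q| := by
      exact le_trans (le_abs_self _) (abs_abs_sub_abs_le_abs_sub _ _)
    have h3 : |XX Γ a - XX Γ q| ≤ dist a q := coord_lip Γ a q 0
    have h4 : dist a q ≤ Metric.hausdorffDist S T := by
      rw [dist_comm, Metric.hausdorffDist_comm] at had
      exact had
    rw [← hq2]
    linarith
  -- `f ∘ mm` is 1-Lipschitz with respect to the Hausdorff distance.
  have hfm_lip : ∀ (S T : Set Γ), S.Nonempty → S.Finite → T.Nonempty → T.Finite →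
      f (mm Γ S) ≤ f (mm Γ T) + Metric.hausdorffDist S T := by
    intro S T hSne hSfin hTne hTfin
    obtain ⟨q, hq, hq2⟩ := hfm_eq T hTne hTfin
    obtain ⟨a, ha, had⟩ := hclose T S hTne hTfin hSne hSfin q hq
    have h1 : f (mm Γ S) ≤ YY Γ a := hfm_le S hSne hSfin a ha
    have h2 : YY Γ a - YY Γ q ≤ |YY Γ a - YY Γ q| := le_abs_self _
    have h3 : |YY Γ a - YY Γ q| ≤ dist a q := coord_lip Γ a q 1
    have h4 : dist a q ≤ Metric.hausdorffDist S T := by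
      rw [dist_comm, Metric.hausdorffDist_comm] at had
      exact had
    rw [hq2]
    linarith
  -- flip safety: if `S` has a nonnegative point and all points of `T` are negative,
  -- then `mm S` is at most the Hausdorff distance.
  have hflip : ∀ (S T : Set Γ), S.Nonempty → S.Finite → T.Nonempty → T.Finite →
      Pos Γ S → ¬ Pos Γ T → mm Γ S ≤ Metric.hausdorffDist S T := by
    intro S T hSne hSfin hTne hTfin hPS hPT
    obtain ⟨p, hp, hp0⟩ := hPS
    obtain ⟨q, hq, hqd⟩ := hclose S T hSne hSfin hTne hTfin p hp
    have hq0 : XX Γ q < 0 := by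
      by_contra h
      exact hPT ⟨q, hq, le_of_not_gt h⟩
    have h1 : mm Γ S ≤ |XX Γ p| := mm_le Γ hSfin hp
    have h2 : |XX Γ p| = XX Γ p := abs_of_nonneg hp0
    have h3 : XX Γ p ≤ XX Γ p - XX Γ q := by linarith
    have h4 : XX Γ p - XX Γ q ≤ |XX Γ p - XX Γ q| := le_abs_self _
    have h5 : |XX Γ p - XX Γ q| ≤ dist p q := coord_lip Γ p q 0
    linarith
  -- `f (xi S) = f (mm S)`.
  have hfxi : ∀ S : Set Γ, f (xi Γ S) = f (mm Γ S) := by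
    intro S
    unfold xi
    split
    · rfl
    · rw [hf_even]
  -- Construct the retraction.
  have hret : (∃ L : ℝ, 0 ≤ L ∧
      ∃ r : {A : Set Γ // A.Nonempty ∧ A.Finite ∧ A.ncard ≤ n} → Γ,
        (∀ (a : Γ) (A : {A : Set Γ // A.Nonempty ∧ A.Finite ∧ A.ncard ≤ n}),
          A.1 = {a} → r A = a) ∧
        (∀ A B : {A : Set Γ // A.Nonempty ∧ A.Finite ∧ A.ncard ≤ n},
          dist (r A) (r B) ≤ L * Metric.hausdorffDist A.1 B.1)) := by
    refine ⟨4, by norm_num, fun A => ⟨pt f (xi Γ A.1), hpt_mem _⟩, ?_, ?_⟩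
    · -- retraction property on singletons
      intro a A hA
      have hxi : xi Γ A.1 = XX Γ a := by
        have hmmA : mm Γ A.1 = |XX Γ a| := by
          unfold mm
          rw [hA, Set.image_singleton, csInf_singleton]
        unfold xi
        split_ifs with h
        · -- Pos holds, so 0 ≤ XX a
          obtain ⟨p, hp, hp0⟩ := h
          rw [hA] at hp
          rw [Set.mem_singleton_iff] at hp
          subst hp
          rw [hmmA, abs_of_nonneg hp0]
        · -- Pos fails, so XX a < 0
          have ha0 : XX Γ a < 0 := by
            by_contra hcon
            exact h ⟨a, by rw [hA]; exact rfl, le_of_not_gt hcon⟩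
          rw [hmmA, abs_of_neg ha0]
          ring
      -- now show the constructed point equals `a`
      apply Subtype.ext
      show pt f (xi Γ A.1) = (a : EuclideanSpace ℝ (Fin 2))
      rw [hxi]
      have hY : (a : EuclideanSpace ℝ (Fin 2)) 1 = f ((a : EuclideanSpace ℝ (Fin 2)) 0) :=
        hmemY a
      apply (WithLp.equiv 2 (Fin 2 → ℝ)).injective
      apply funext
      intro i
      fin_cases i
      · show pt f (XX Γ a) 0 = (a : EuclideanSpace ℝ (Fin 2)) 0
        rw [pt_apply_zero]
        rfl
      · show pt f (XX Γ a) 1 = (a : EuclideanSpace ℝ (Fin 2)) 1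
        rw [pt_apply_one, hY]
        rfl
    · -- Lipschitz property
      intro A B
      obtain ⟨hAne, hAfin, -⟩ := A.2
      obtain ⟨hBne, hBfin, -⟩ := B.2
      set d := Metric.hausdorffDist A.1 B.1 with hd
      have hd0 : 0 ≤ d := Metric.hausdorffDist_nonneg
      -- bound on the `y`-difference
      have hy : |f (mm Γ A.1) - f (mm Γ B.1)| ≤ d := by
        rw [abs_sub_le_iff]
        constructor
        · have := hfm_lip A.1 B.1 hAne hAfin hBne hBfin
          linarith
        · have := hfm_lip B.1 A.1 hBne hBfin hAne hAfin
          rw [Metric.hausdorffDist_comm] at this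
          linarith
      -- bound on the `mm`-difference
      have hm : |mm Γ A.1 - mm Γ B.1| ≤ d := by
        rw [abs_sub_le_iff]
        constructor
        · have := hmm_lip A.1 B.1 hAne hAfin hBne hBfin
          linarith
        · have := hmm_lip B.1 A.1 hBne hBfin hAne hAfin
          rw [Metric.hausdorffDist_comm] at this
          linarith
      -- bound on the `xi`-difference
      have hxi : |xi Γ A.1 - xi Γ B.1| ≤ 3 * d := by
        have hmA0 : 0 ≤ mm Γ A.1 := mm_nonneg Γ hAne hAfin
        have hmB0 : 0 ≤ mm Γ B.1 := mm_nonneg Γ hBne hBfin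
        unfold xi
        by_cases hPA : Pos Γ A.1 <;> by_cases hPB : Pos Γ B.1
        · rw [if_pos hPA, if_pos hPB]
          linarith [abs_le.mp hm]
        · rw [if_pos hPA, if_neg hPB]
          have h1 : mm Γ A.1 ≤ d := hflip A.1 B.1 hAne hAfin hBne hBfin hPA hPB
          have h2 : mm Γ B.1 ≤ mm Γ A.1 + d := by
            have := hmm_lip B.1 A.1 hBne hBfin hAne hAfin
            rw [Metric.hausdorffDist_comm] at this
            linarith
          rw [abs_le]
          constructor <;> linarith
        · rw [if_neg hPA, if_pos hPB]
          have h1 : mm Γ B.1 ≤ d := by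
            have := hflip B.1 A.1 hBne hBfin hAne hAfin hPB hPA
            rw [Metric.hausdorffDist_comm] at this
            linarith
          have h2 : mm Γ A.1 ≤ mm Γ B.1 + d := hmm_lip A.1 B.1 hAne hAfin hBne hBfin
          rw [abs_le]
          constructor <;> linarith
        · rw [if_neg hPA, if_neg hPB]
          have hmm' := abs_le.mp hm
          rw [abs_le]
          constructor <;> linarith [hmm'.1, hmm'.2]
      -- conclude
      have hsub : dist (⟨pt f (xi Γ A.1), hpt_mem _⟩ : Γ) ⟨pt f (xi Γ B.1), hpt_mem _⟩
          = dist (pt f (xi Γ A.1)) (pt f (xi Γ B.1)) := Subtype.dist_eq _ _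
      calc dist (⟨pt f (xi Γ A.1), hpt_mem _⟩ : Γ) ⟨pt f (xi Γ B.1), hpt_mem _⟩
          = dist (pt f (xi Γ A.1)) (pt f (xi Γ B.1)) := hsub
        _ ≤ |xi Γ A.1 - xi Γ B.1| + |f (xi Γ A.1) - f (xi Γ B.1)| := dist_pt_le f _ _
        _ ≤ 3 * d + d := by
            rw [hfxi, hfxi]
            exact add_le_add hxi hy
        _ = 4 * d := by ring
  refine ⟨hret, ?_⟩
  -- Derive the Lipschitz `n`-mean from the retraction.
  obtain ⟨L, hL, r, hr1, hr2⟩ := hret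
  have hnempty : Nonempty (Fin n) := ⟨⟨0, by omega⟩⟩
  have hcard : ∀ x : Fin n → Γ, (Set.range x).ncard ≤ n := by
    intro x
    have h1 : (Set.range x).ncard ≤ (Set.univ : Set (Fin n)).ncard := by
      rw [← Set.image_univ]
      exact Set.ncard_image_le Set.finite_univ
    simpa [Set.ncard_univ] using h1
  refine ⟨L, hL,
    fun x => r ⟨Set.range x, Set.range_nonempty x, Set.finite_range x, hcard x⟩, ?_, ?_, ?_⟩
  · -- symmetry
    intro x π
    exact congrArg r (Subtype.ext (π.surjective.range_comp x))
  · -- idempotence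
    intro a
    exact hr1 a _ (Set.range_const)
  · -- Lipschitz property
    intro x y
    have hdle : Metric.hausdorffDist (Set.range x) (Set.range y)
        ≤ ∑ k, dist (x k) (y k) := by
      have hsum0 : 0 ≤ ∑ k, dist (x k) (y k) :=
        Finset.sum_nonneg fun _ _ => dist_nonneg
      refine Metric.hausdorffDist_le_of_infDist hsum0 ?_ ?_
      · rintro p ⟨k, rfl⟩
        refine le_trans (Metric.infDist_le_dist_of_mem (Set.mem_range_self k)) ?_
        exact Finset.single_le_sum (fun _ _ => dist_nonneg) (Finset.mem_univ k)
      · rintro p ⟨k, rfl⟩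
        refine le_trans (Metric.infDist_le_dist_of_mem (Set.mem_range_self k)) ?_
        rw [dist_comm]
        exact Finset.single_le_sum (fun _ _ => dist_nonneg) (Finset.mem_univ k)
    refine le_trans (hr2 _ _) ?_
    exact mul_le_mul_of_nonneg_left hdle hL
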